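/- Let p ∈ (1,n) and q > 1 with q ≠ n−p. If Ω and Ω̃ are bounded convex domains containing the origin whose L_q p-capacitary measures coincide, μ_{p,q}(Ω,·) = μ_{p,q}(Ω̃,·), then Ω = Ω̃. If q = n−p > 1, then Ω and Ω̃ are dilates of each other. -/

import Mathlib

open MeasureTheory Set
open scoped Pointwise

/-- The support function `h_K(u) = sup_{x ∈ K} ⟨x, u⟩` of a set `K ⊆ ℝⁿ`. -/
noncomputable def suppFn (n : ℕ) (K : Set (EuclideanSpace ℝ (Fin n)))
    (u : EuclideanSpace ℝ (Fin n)) : ℝ :=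
  sSup ((fun x => (inner ℝ x u : ℝ)) '' K)

/-- A bounded open convex domain containing the origin. -/
def IsConvexDomain (n : ℕ) (Ω : Set (EuclideanSpace ℝ (Fin n))) : Prop :=
  IsOpen Ω ∧ Convex ℝ Ω ∧ Bornology.IsBounded Ω ∧ (0 : EuclideanSpace ℝ (Fin n)) ∈ Ω

/-- The `L_q` mixed `p`-capacity
`C_{p,q}(Ω,Ω₁) = (p−1)/(n−p) ∫ h_{Ω₁}^q h_Ω^{1−q} dμ_p(Ω,·)`. -/
noncomputable def LqMixedCap (n : ℕ) (p q : ℝ)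
    (μp : Set (EuclideanSpace ℝ (Fin n)) →
      Measure (Metric.sphere (0 : EuclideanSpace ℝ (Fin n)) 1))
    (Ω Ω₁ : Set (EuclideanSpace ℝ (Fin n))) : ℝ :=
  (p - 1) / ((n : ℝ) - p) *
    ∫ u, (suppFn n Ω₁ ↑u) ^ q * (suppFn n Ω ↑u) ^ (1 - q) ∂(μp Ω)

/-- The `L_q` `p`-capacitary measure `dμ_{p,q}(Ω,·) = h_Ω^{1−q} dμ_p(Ω,·)`. -/
noncomputable def LqCapMeasure (n : ℕ) (q : ℝ)
    (μp : Set (EuclideanSpace ℝ (Fin n)) →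
      Measure (Metric.sphere (0 : EuclideanSpace ℝ (Fin n)) 1))
    (Ω : Set (EuclideanSpace ℝ (Fin n))) :
    Measure (Metric.sphere (0 : EuclideanSpace ℝ (Fin n)) 1) :=
  (μp Ω).withDensity (fun u => ENNReal.ofReal ((suppFn n Ω ↑u) ^ (1 - q)))


lemma suppFn_bdd {n : ℕ} {K : Set (EuclideanSpace ℝ (Fin n))} {R : ℝ}
    (hK : K ⊆ Metric.closedBall 0 R) (u : EuclideanSpace ℝ (Fin n)) (hu : ‖u‖ = 1) :
    BddAbove ((fun x => (inner ℝ x u : ℝ)) '' K) := by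
  refine ⟨R, ?_⟩
  rintro y ⟨x, hx, rfl⟩
  have hxR : ‖x‖ ≤ R := by simpa using hK hx
  calc (inner ℝ x u : ℝ) ≤ ‖x‖ * ‖u‖ := real_inner_le_norm x u
    _ ≤ R := by rw [hu, mul_one]; exact hxR

lemma suppFn_pos {n : ℕ} {Ω : Set (EuclideanSpace ℝ (Fin n))}
    (hΩ : IsConvexDomain n Ω) (u : EuclideanSpace ℝ (Fin n)) (hu : ‖u‖ = 1) :
    0 < suppFn n Ω u := by
  obtain ⟨hΩo, _, hΩb, hΩ0⟩ := hΩ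
  obtain ⟨ε, hε, hball⟩ := Metric.isOpen_iff.mp hΩo 0 hΩ0
  obtain ⟨R, hR⟩ := hΩb.subset_closedBall 0
  have hx : (ε / 2) • u ∈ Ω := by
    apply hball
    simp only [Metric.mem_ball, dist_zero_right, norm_smul, hu, mul_one]
    rw [Real.norm_eq_abs, abs_of_pos (by linarith)]
    linarith
  have hle : ε / 2 ≤ suppFn n Ω u := by
    have : (inner ℝ ((ε / 2) • u) u : ℝ) = ε / 2 := by
      rw [real_inner_smul_left, real_inner_self_eq_norm_mul_norm, hu]
      ring
    calc ε / 2 = (inner ℝ ((ε / 2) • u) u : ℝ) := this.symm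
      _ ≤ suppFn n Ω u := le_csSup (suppFn_bdd hR u hu) (mem_image_of_mem _ hx)
  linarith

lemma suppFn_lipschitz_aux {n : ℕ} {K : Set (EuclideanSpace ℝ (Fin n))} {R : ℝ}
    (hR : 0 ≤ R) (hK : K ⊆ Metric.closedBall 0 R) (hne : K.Nonempty)
    (hbd : ∀ w : EuclideanSpace ℝ (Fin n), ‖w‖ = 1 →
      BddAbove ((fun x => (inner ℝ x w : ℝ)) '' K))
    (u v : EuclideanSpace ℝ (Fin n)) (hu : ‖u‖ = 1) (hv : ‖v‖ = 1) :
    suppFn n K u ≤ suppFn n K v + R * ‖u - v‖ := by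
  apply csSup_le (hne.image _)
  rintro y ⟨x, hx, rfl⟩
  have h1 : (inner ℝ x u : ℝ) = (inner ℝ x v : ℝ) + (inner ℝ x (u - v) : ℝ) := by
    rw [inner_sub_right]; ring
  have h2 : (inner ℝ x v : ℝ) ≤ suppFn n K v := le_csSup (hbd v hv) (mem_image_of_mem _ hx)
  have h3 : (inner ℝ x (u - v) : ℝ) ≤ R * ‖u - v‖ := by
    calc (inner ℝ x (u - v) : ℝ) ≤ ‖x‖ * ‖u - v‖ := real_inner_le_norm _ _
      _ ≤ R * ‖u - v‖ := by
        apply mul_le_mul_of_nonneg_right _ (norm_nonneg _)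
        simpa using hK hx
  linarith

lemma suppFn_measurable {n : ℕ} {Ω : Set (EuclideanSpace ℝ (Fin n))}
    (hΩ : IsConvexDomain n Ω) :
    Measurable (fun u : Metric.sphere (0 : EuclideanSpace ℝ (Fin n)) 1 => suppFn n Ω ↑u) := by
  obtain ⟨hΩo, _, hΩb, hΩ0⟩ := hΩ
  obtain ⟨R, hR⟩ := hΩb.subset_closedBall 0
  have hR0 : 0 ≤ R := by simpa using hR hΩ0
  have hbd : ∀ w : EuclideanSpace ℝ (Fin n), ‖w‖ = 1 →
      BddAbove ((fun x => (inner ℝ x w : ℝ)) '' Ω) := fun w hw => suppFn_bdd hR w hw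
  have hlip : LipschitzOnWith R.toNNReal (suppFn n Ω)
      (Metric.sphere (0 : EuclideanSpace ℝ (Fin n)) 1) := by
    rw [lipschitzOnWith_iff_dist_le_mul]
    intro u hu v hv
    have hu1 : ‖u‖ = 1 := by simpa using hu
    have hv1 : ‖v‖ = 1 := by simpa using hv
    rw [Real.dist_eq, dist_eq_norm]
    have l1 := suppFn_lipschitz_aux hR0 hR ⟨0, hΩ0⟩ hbd u v hu1 hv1
    have l2 := suppFn_lipschitz_aux hR0 hR ⟨0, hΩ0⟩ hbd v u hv1 hu1
    rw [abs_le]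
    constructor
    · rw [Real.coe_toNNReal _ hR0]
      have : ‖v - u‖ = ‖u - v‖ := by rw [norm_sub_rev]
      nlinarith [l2, this]
    · rw [Real.coe_toNNReal _ hR0]
      linarith
  have hcont : ContinuousOn (suppFn n Ω) (Metric.sphere (0 : EuclideanSpace ℝ (Fin n)) 1) :=
    hlip.continuousOn
  exact (hcont.restrict).measurable



lemma integral_withDensity_ofReal {α : Type*} [MeasurableSpace α] (μ : Measure α)
    (f : α → ℝ) (hf : Measurable f) (hf0 : ∀ x, 0 ≤ f x) (g : α → ℝ) :
    ∫ x, g x ∂(μ.withDensity (fun x => ENNReal.ofReal (f x))) = ∫ x, f x * g x ∂μ := by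
  have hmeas : Measurable fun x => (f x).toNNReal := hf.real_toNNReal
  have hrw : (fun x => ENNReal.ofReal (f x)) = fun x => (((f x).toNNReal : NNReal) : ENNReal) :=
    rfl
  rw [hrw, integral_withDensity_eq_integral_smul hmeas g]
  congr 1
  funext x
  rw [NNReal.smul_def, Real.coe_toNNReal _ (hf0 x), smul_eq_mul]

/-- for `p ∈ (1,n)` and `q > 1`, if two bounded convex domains containing the
origin have the same `L_q` `p`-capacitary measure, then they coincide when `q ≠ n − p`, and
they are dilates of each other when `q = n − p`.  The `p`-capacity `Cp` and the `p`-capacitary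
measures `μp` are linked by the Poincaré formula, the `L_q` `p`-capacitary Minkowski
inequality with its equality characterization, and the homogeneity of the `p`-capacity. -/
theorem Lq_capacitary_measure_unique (n : ℕ) (p q : ℝ) (hp : 1 < p) (hpn : p < n) (hq : 1 < q)
    (μp : Set (EuclideanSpace ℝ (Fin n)) →
      Measure (Metric.sphere (0 : EuclideanSpace ℝ (Fin n)) 1))
    (Cp : Set (EuclideanSpace ℝ (Fin n)) → ℝ)
    (hCppos : ∀ Ω, IsConvexDomain n Ω → 0 < Cp Ω)
    (hPoincare : ∀ Ω, IsConvexDomain n Ω →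
      (p - 1) / ((n : ℝ) - p) * ∫ u, suppFn n Ω ↑u ∂(μp Ω) = Cp Ω)
    (hMinkowski : ∀ Ω Ω₁, IsConvexDomain n Ω → IsConvexDomain n Ω₁ →
      LqMixedCap n p q μp Ω Ω₁ ≥
        Cp Ω ^ (((n : ℝ) - p - q) / ((n : ℝ) - p)) * Cp Ω₁ ^ (q / ((n : ℝ) - p)) ∧
      (LqMixedCap n p q μp Ω Ω₁ =
          Cp Ω ^ (((n : ℝ) - p - q) / ((n : ℝ) - p)) * Cp Ω₁ ^ (q / ((n : ℝ) - p)) →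
        ∃ c : ℝ, 0 < c ∧ Ω₁ = c • Ω))
    (hHom : ∀ Ω, IsConvexDomain n Ω → ∀ c : ℝ, 0 < c →
      Cp (c • Ω) = c ^ ((n : ℝ) - p) * Cp Ω)
    (Ω Ω' : Set (EuclideanSpace ℝ (Fin n)))
    (hΩ : IsConvexDomain n Ω) (hΩ' : IsConvexDomain n Ω')
    (hμeq : LqCapMeasure n q μp Ω = LqCapMeasure n q μp Ω') :
    (q ≠ (n : ℝ) - p → Ω = Ω') ∧
    (q = (n : ℝ) - p → ∃ c : ℝ, 0 < c ∧ Ω' = c • Ω) := by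
  have hnp : (0 : ℝ) < (n : ℝ) - p := by linarith
  -- Key : if the two L_q capacitary measures agree then the mixed capacity collapses.
  have hkey : ∀ A B, IsConvexDomain n A → IsConvexDomain n B →
      LqCapMeasure n q μp A = LqCapMeasure n q μp B →
      LqMixedCap n p q μp A B = Cp B := by
    intro A B hA hB hAB
    have hmeasA := suppFn_measurable hA
    have hmeasB := suppFn_measurable hB
    have hposA : ∀ u : Metric.sphere (0 : EuclideanSpace ℝ (Fin n)) 1, 0 < suppFn n A ↑u :=
      fun u => suppFn_pos hA ↑u (by simpa using u.2)
    have hposB : ∀ u : Metric.sphere (0 : EuclideanSpace ℝ (Fin n)) 1, 0 < suppFn n B ↑u :=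
      fun u => suppFn_pos hB ↑u (by simpa using u.2)
    have mA : Measurable fun u : Metric.sphere (0 : EuclideanSpace ℝ (Fin n)) 1 =>
        (suppFn n A ↑u) ^ (1 - q) := hmeasA.pow_const _
    have mB : Measurable fun u : Metric.sphere (0 : EuclideanSpace ℝ (Fin n)) 1 =>
        (suppFn n B ↑u) ^ (1 - q) := hmeasB.pow_const _
    have chain : (∫ u, (suppFn n B ↑u) ^ q * (suppFn n A ↑u) ^ (1 - q) ∂(μp A))
        = ∫ u, suppFn n B ↑u ∂(μp B) := by
      have c1 : (fun u : Metric.sphere (0 : EuclideanSpace ℝ (Fin n)) 1 =>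
          (suppFn n B ↑u) ^ q * (suppFn n A ↑u) ^ (1 - q))
          = fun u : Metric.sphere (0 : EuclideanSpace ℝ (Fin n)) 1 =>
            (suppFn n A ↑u) ^ (1 - q) * (suppFn n B ↑u) ^ q := by
        funext u; ring
      rw [c1, ← integral_withDensity_ofReal (μp A) _ mA
        (fun u => (Real.rpow_nonneg (hposA u).le _))
        (fun u : Metric.sphere (0 : EuclideanSpace ℝ (Fin n)) 1 => (suppFn n B ↑u) ^ q)]
      have c2 : (μp A).withDensity
            (fun u => ENNReal.ofReal ((suppFn n A ↑u) ^ (1 - q)))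
          = LqCapMeasure n q μp A := rfl
      rw [c2, hAB]
      have c3 : LqCapMeasure n q μp B = (μp B).withDensity
          (fun u => ENNReal.ofReal ((suppFn n B ↑u) ^ (1 - q))) := rfl
      rw [c3, integral_withDensity_ofReal (μp B) _ mB
        (fun u => (Real.rpow_nonneg (hposB u).le _))
        (fun u : Metric.sphere (0 : EuclideanSpace ℝ (Fin n)) 1 => (suppFn n B ↑u) ^ q)]
      congr 1
      funext u
      rw [← Real.rpow_add (hposB u)]
      norm_num
    unfold LqMixedCap
    rw [chain, hPoincare B hB]
  have e1 : LqMixedCap n p q μp Ω Ω' = Cp Ω' := hkey Ω Ω' hΩ hΩ' hμeq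
  have e2 : LqMixedCap n p q μp Ω' Ω = Cp Ω := hkey Ω' Ω hΩ' hΩ hμeq.symm
  have ha : 0 < Cp Ω := hCppos Ω hΩ
  have hb : 0 < Cp Ω' := hCppos Ω' hΩ'
  obtain ⟨m1, m1eq⟩ := hMinkowski Ω Ω' hΩ hΩ'
  obtain ⟨m2, -⟩ := hMinkowski Ω' Ω hΩ' hΩ
  rw [e1] at m1 m1eq
  rw [e2] at m2
  set a := Cp Ω with ha_def
  set b := Cp Ω' with hb_def
  set t := ((n : ℝ) - p - q) / ((n : ℝ) - p) with ht_def
  set s := q / ((n : ℝ) - p) with hs_def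
  have hts : t + s = 1 := by rw [ht_def, hs_def]; field_simp; ring
  have hb1 : b = b ^ t * b ^ s := by
    rw [← Real.rpow_add hb, hts, Real.rpow_one]
  have ha1 : a = a ^ t * a ^ s := by
    rw [← Real.rpow_add ha, hts, Real.rpow_one]
  have hbs : 0 < b ^ s := Real.rpow_pos_of_pos hb s
  have has : 0 < a ^ s := Real.rpow_pos_of_pos ha s
  have h1 : a ^ t ≤ b ^ t := le_of_mul_le_mul_right (by rw [← hb1]; exact m1) hbs
  have h2 : b ^ t ≤ a ^ t := le_of_mul_le_mul_right (by rw [← ha1]; exact m2) has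
  have habt : a ^ t = b ^ t := le_antisymm h1 h2
  constructor
  · intro hne
    have ht : t ≠ 0 := by
      rw [ht_def, div_ne_zero_iff]
      exact ⟨fun h => hne (by linarith), hnp.ne'⟩
    have hab : a = b := by
      have h3 : (a ^ t) ^ (1 / t) = (b ^ t) ^ (1 / t) := by rw [habt]
      rwa [← Real.rpow_mul ha.le, ← Real.rpow_mul hb.le, mul_one_div_cancel ht,
        Real.rpow_one, Real.rpow_one] at h3
    obtain ⟨c, hc, hcΩ⟩ := m1eq (by rw [← hab, ← ha1])
    have hhom : b = c ^ ((n : ℝ) - p) * a := by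
      rw [hb_def, ha_def, hcΩ]
      exact hHom Ω hΩ c hc
    have hcE : c ^ ((n : ℝ) - p) = 1 :=
      mul_right_cancel₀ ha.ne'
        (by rw [one_mul, ← hhom, hab] : c ^ ((n : ℝ) - p) * a = 1 * a)
    have hc1 : c = 1 := by
      have h4 : (c ^ ((n : ℝ) - p)) ^ (1 / ((n : ℝ) - p))
          = (1 : ℝ) ^ (1 / ((n : ℝ) - p)) := by rw [hcE]
      rwa [← Real.rpow_mul hc.le, mul_one_div_cancel hnp.ne', Real.rpow_one,
        Real.one_rpow] at h4
    rw [hcΩ, hc1, one_smul]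
  · intro heq
    have ht0 : t = 0 := by rw [ht_def, heq]; simp
    have hs1 : s = 1 := by rw [hs_def, heq, div_self hnp.ne']
    exact m1eq (by rw [ht0, hs1, Real.rpow_zero, Real.rpow_one, one_mul])
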